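/- The optimal value of the p-center problem over all sites equals the optimal value of the p-center problem restricted to the non-dominated sites. -/

import Mathlib

open scoped Classical

def Dominated {ι : Type*} {M : ℕ} (d : ι → Fin M → ℝ) (R : Finset ι)
    (j₁ j₂ : Fin M) : Prop :=
  (∀ i ∈ R, d i j₂ ≤ d i j₁) ∧ ((∃ i ∈ R, d i j₂ < d i j₁) ∨ j₁ < j₂)

noncomputable def radOn {ι : Type*} {M : ℕ} (d : ι → Fin M → ℝ)
    (R : Finset ι) (hR : R.Nonempty) (S : Finset (Fin M)) (hS : S.Nonempty) : ℝ :=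
  R.sup' hR fun i => S.inf' hS fun j => d i j

noncomputable def optOnSites {ι : Type*} {M : ℕ} (d : ι → Fin M → ℝ)
    (R : Finset ι) (hR : R.Nonempty) (p : ℕ) (J : Finset (Fin M)) : ℝ :=
  sInf {r | ∃ S : Finset (Fin M), S ⊆ J ∧
    ∃ hS : S.Nonempty, S.card ≤ p ∧ r = radOn d R hR S hS}

lemma exists_nondom {ι : Type*} {M : ℕ} (d : ι → Fin M → ℝ) (R : Finset ι)
    (j : Fin M) :
    ∃ j' : Fin M, (¬ ∃ j'', Dominated d R j' j'') ∧ ∀ i ∈ R, d i j' ≤ d i j := by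
  classical
  set T : Finset (Fin M) := Finset.univ.filter (fun j' => ∀ i ∈ R, d i j' ≤ d i j) with hT
  have hjT : j ∈ T := by simp [hT]
  have hTne : T.Nonempty := ⟨j, hjT⟩
  set m : ℝ := T.inf' hTne (fun j' => ∑ i ∈ R, d i j') with hm
  set T2 : Finset (Fin M) := T.filter (fun j' => ∑ i ∈ R, d i j' = m) with hT2
  have hT2ne : T2.Nonempty := by
    obtain ⟨j', hj', hjeq⟩ := T.exists_mem_eq_inf' hTne (fun j' => ∑ i ∈ R, d i j')
    exact ⟨j', by simp [hT2, hj', hjeq.symm, hm]⟩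
  set jm := T2.max' hT2ne with hjs
  have hjsT2 : jm ∈ T2 := T2.max'_mem hT2ne
  have hjsT : jm ∈ T := (Finset.mem_filter.mp hjsT2).1
  have hjssum : ∑ i ∈ R, d i jm = m := (Finset.mem_filter.mp hjsT2).2
  have hjsle : ∀ i ∈ R, d i jm ≤ d i j := by
    have := Finset.mem_filter.mp hjsT
    exact this.2
  refine ⟨jm, ?_, hjsle⟩
  rintro ⟨j'', ⟨hle, hstrict⟩⟩
  have hj''T : j'' ∈ T := by
    simp only [hT, Finset.mem_filter, Finset.mem_univ, true_and]
    exact fun i hi => le_trans (hle i hi) (hjsle i hi)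
  have hmle : m ≤ ∑ i ∈ R, d i j'' := Finset.inf'_le _ hj''T
  have hsumle : ∑ i ∈ R, d i j'' ≤ ∑ i ∈ R, d i jm :=
    Finset.sum_le_sum hle
  rcases hstrict with ⟨i0, hi0, hlt⟩ | hidx
  · have : ∑ i ∈ R, d i j'' < ∑ i ∈ R, d i jm :=
      Finset.sum_lt_sum hle ⟨i0, hi0, hlt⟩
    rw [hjssum] at this
    exact absurd hmle (not_le.mpr this)
  · have hsumeq : ∑ i ∈ R, d i j'' = m := le_antisymm (hjssum ▸ hsumle) hmle
    have hj''T2 : j'' ∈ T2 := Finset.mem_filter.mpr ⟨hj''T, hsumeq⟩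
    have := T2.le_max' j'' hj''T2
    exact absurd hidx (not_lt.mpr this)

theorem opt_eq_opt_on_nondominated {ι : Type*} {M : ℕ} (hM : 0 < M)
    (d : ι → Fin M → ℝ) (R : Finset ι) (hR : R.Nonempty) (p : ℕ) (hp : 1 ≤ p) :
    optOnSites d R hR p Finset.univ =
      optOnSites d R hR p
        (Finset.univ.filter fun j => ¬ ∃ j', Dominated d R j j') := by
  classical
  set N : Finset (Fin M) := Finset.univ.filter fun j => ¬ ∃ j', Dominated d R j j' with hN
  set A : Set ℝ := {r | ∃ S : Finset (Fin M), S ⊆ Finset.univ ∧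
    ∃ hS : S.Nonempty, S.card ≤ p ∧ r = radOn d R hR S hS} with hA
  set B : Set ℝ := {r | ∃ S : Finset (Fin M), S ⊆ N ∧
    ∃ hS : S.Nonempty, S.card ≤ p ∧ r = radOn d R hR S hS} with hB
  have hBA : B ⊆ A := by
    rintro r ⟨S, _, hS, hc, hr⟩
    exact ⟨S, Finset.subset_univ S, hS, hc, hr⟩
  have j0 : Fin M := ⟨0, hM⟩
  have hUne : (Finset.univ : Finset (Fin M)).Nonempty := ⟨j0, Finset.mem_univ _⟩
  -- lower bound for A
  set c : ℝ := R.inf' hR (fun i => Finset.univ.inf' hUne (d i)) with hc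
  have hbddA : ∀ r ∈ A, c ≤ r := by
    rintro r ⟨S, _, hS, _, rfl⟩
    obtain ⟨i0, hi0⟩ := id hR
    calc c ≤ Finset.univ.inf' hUne (d i0) := Finset.inf'_le _ hi0
      _ ≤ S.inf' hS (d i0) :=
          Finset.le_inf' _ _ (fun j hj => Finset.inf'_le _ (Finset.mem_univ j))
      _ ≤ radOn d R hR S hS := Finset.le_sup' (fun i => S.inf' hS fun j => d i j) hi0
  -- choice of dominating nondominated site
  have hg : ∀ j : Fin M, ∃ j' : Fin M,
      (¬ ∃ j'', Dominated d R j' j'') ∧ ∀ i ∈ R, d i j' ≤ d i j :=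
    fun j => exists_nondom d R j
  choose g hg1 hg2 using hg
  have hgN : ∀ j, g j ∈ N := fun j => by
    simp only [hN, Finset.mem_filter, Finset.mem_univ, true_and]
    exact hg1 j
  have hBne : B.Nonempty := by
    refine ⟨radOn d R hR {g j0} (Finset.singleton_nonempty _),
      {g j0}, ?_, Finset.singleton_nonempty _, ?_, rfl⟩
    · intro x hx; rw [Finset.mem_singleton] at hx; subst hx; exact hgN j0
    · simpa using hp
  obtain ⟨rB, hrB⟩ := hBne
  have hBne : B.Nonempty := ⟨rB, hrB⟩
  have hAne : A.Nonempty := ⟨rB, hBA hrB⟩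
  have hbddBelowA : BddBelow A := ⟨c, hbddA⟩
  have hbddBelowB : BddBelow B := ⟨c, fun r hr => hbddA r (hBA hr)⟩
  show sInf A = sInf B
  apply le_antisymm
  · exact csInf_le_csInf hbddBelowA hBne hBA
  · apply le_csInf hAne
    rintro r ⟨S, _, hS, hcard, rfl⟩
    set S' : Finset (Fin M) := S.image g with hS'
    have hS'ne : S'.Nonempty := hS.image g
    have hS'N : S' ⊆ N := by
      intro x hx
      obtain ⟨j, _, rfl⟩ := Finset.mem_image.mp hx
      exact hgN j
    have hS'card : S'.card ≤ p := le_trans (Finset.card_image_le) hcard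
    have hrad : radOn d R hR S' hS'ne ≤ radOn d R hR S hS := by
      apply Finset.sup'_le
      intro i hi
      obtain ⟨j, hj, hjeq⟩ := S.exists_mem_eq_inf' hS (fun j => d i j)
      calc S'.inf' hS'ne (fun j => d i j) ≤ d i (g j) :=
            Finset.inf'_le _ (Finset.mem_image_of_mem g hj)
        _ ≤ d i j := hg2 j i hi
        _ = S.inf' hS (fun j => d i j) := hjeq.symm
        _ ≤ radOn d R hR S hS := Finset.le_sup' (fun i => S.inf' hS fun j => d i j) hi
    exact le_trans (csInf_le hbddBelowB ⟨S', hS'N, hS'ne, hS'card, rfl⟩) hrad
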